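/- In the monitoring game, assume p_c ≤ p_a, p_c ≤ p_b, p_c/(p_a + p_c) < ν* < p_b/(p_b + p_c), and ν* ≠ p_b/(p_a + p_b). Then there is no pure clustered analogy-based expectation equilibrium in which the employer uses a single two-class analogy partition: there is no triple (An, m, ζ), where An is a partition of {a,b,c} into two nonempty classes, m : {a,b,c} → [0,1] gives the employer's control probabilities, and ζ ∈ [0,1] is type c's probability of low effort, satisfying simultaneously: (i) worker best response: m(c) < μ* ⇒ ζ = 1 and m(c) > μ* ⇒ ζ = 0; (ii) employer best response: for each ω ∈ {a,b,c}, writing α for the class of An containing ω, β₁(α) < ν* ⇒ m(ω) = 1 and β₁(α) > ν* ⇒ m(ω) = 0; (iii) local clustering: (e₁(ω) − β₁(α))² ≤ (e₁(ω) − β₁(α'))² for all classes α, α' of An and all ω ∈ α. -/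

import Mathlib

/-- The three worker types of the monitoring game. -/
inductive Typ : Type
  | a | b | c
  deriving DecidableEq

instance : Fintype Typ :=
  ⟨{Typ.a, Typ.b, Typ.c}, fun x => by cases x <;> simp⟩

/-- Probabilities of the worker types. -/
noncomputable def pmap (pa pb pc : ℝ) : Typ → ℝ
  | .a => pa
  | .b => pb
  | .c => pc

/-- Probability of high effort of each worker type, when type `c` chooses low effort
with probability `ζ`. -/
noncomputable def emap (ζ : ℝ) : Typ → ℝ
  | .a => 0
  | .b => 1
  | .c => 1 - ζ

/-- The analogy class (fiber) of type `ω` under the two-class partition encoded by `g`. -/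
def cls (g : Typ → Bool) (ω : Typ) : Finset Typ :=
  Finset.univ.filter fun ω' => g ω' = g ω

/-- The employer's analogy-based expectation of high effort on the class `α`. -/
noncomputable def beta1 (p e : Typ → ℝ) (α : Finset Typ) : ℝ :=
  (∑ ω ∈ α, p ω * e ω) / ∑ ω ∈ α, p ω

/-- Case where the partition is `{a} | {b,c}`. -/
lemma case_bc (pa pb pc : ℝ) (hpb : 0 < pb) (hpc : 0 < pc)
    (μs νs : ℝ) (hμ0 : 0 < μs) (hν0 : 0 < νs)
    (hν_hi : νs < pb / (pb + pc))
    (g : Typ → Bool)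
    (hA : cls g Typ.a = {Typ.a})
    (hC : cls g Typ.c = {Typ.b, Typ.c})
    (m : Typ → ℝ) (ζ : ℝ) (hζ1 : ζ ≤ 1)
    (hw : m Typ.c < μs → ζ = 1)
    (he : νs < beta1 (pmap pa pb pc) (emap ζ) (cls g Typ.c) → m Typ.c = 0)
    (hlc : (emap ζ Typ.c - beta1 (pmap pa pb pc) (emap ζ) (cls g Typ.c)) ^ 2 ≤
        (emap ζ Typ.c - beta1 (pmap pa pb pc) (emap ζ) (cls g Typ.a)) ^ 2) : False := by
  have hpbc : (0:ℝ) < pb + pc := by linarith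
  have hBC : beta1 (pmap pa pb pc) (emap ζ) (cls g Typ.c) = (pb + pc*(1-ζ))/(pb+pc) := by
    rw [hC]; simp [beta1, Finset.sum_pair (by decide : Typ.b ≠ Typ.c), pmap, emap]
  have hBA : beta1 (pmap pa pb pc) (emap ζ) (cls g Typ.a) = 0 := by
    rw [hA]; simp [beta1, pmap, emap]
  rw [lt_div_iff₀ hpbc] at hν_hi
  have hgt : νs < beta1 (pmap pa pb pc) (emap ζ) (cls g Typ.c) := by
    rw [hBC, lt_div_iff₀ hpbc]
    nlinarith
  have hmc := he hgt
  have hζ : ζ = 1 := hw (by rw [hmc]; exact hμ0)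
  subst hζ
  rw [hBC, hBA] at hlc
  simp only [emap] at hlc
  have : (0:ℝ) < (pb + pc*(1-1))/(pb+pc) := by positivity
  nlinarith

/-- Case where the partition is `{b} | {a,c}`. -/
lemma case_ac (pa pb pc : ℝ) (hpa : 0 < pa) (hpb : 0 < pb) (hpc : 0 < pc)
    (μs νs : ℝ) (hμ1 : μs < 1) (hν1 : νs < 1)
    (hν_lo : pc / (pa + pc) < νs)
    (g : Typ → Bool)
    (hB : cls g Typ.b = {Typ.b})
    (hC : cls g Typ.c = {Typ.a, Typ.c})
    (m : Typ → ℝ) (ζ : ℝ) (hζ0 : 0 ≤ ζ)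
    (hw : μs < m Typ.c → ζ = 0)
    (he : beta1 (pmap pa pb pc) (emap ζ) (cls g Typ.c) < νs → m Typ.c = 1)
    (hlc : (emap ζ Typ.c - beta1 (pmap pa pb pc) (emap ζ) (cls g Typ.c)) ^ 2 ≤
        (emap ζ Typ.c - beta1 (pmap pa pb pc) (emap ζ) (cls g Typ.b)) ^ 2) : False := by
  have hpac : (0:ℝ) < pa + pc := by linarith
  have hBC : beta1 (pmap pa pb pc) (emap ζ) (cls g Typ.c) = (pc*(1-ζ))/(pa+pc) := by
    rw [hC]; simp [beta1, Finset.sum_pair (by decide : Typ.a ≠ Typ.c), pmap, emap]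
  have hBB : beta1 (pmap pa pb pc) (emap ζ) (cls g Typ.b) = 1 := by
    rw [hB]; simp [beta1, pmap, emap]
    exact hpb.ne'
  rw [div_lt_iff₀ hpac] at hν_lo
  have hlt : beta1 (pmap pa pb pc) (emap ζ) (cls g Typ.c) < νs := by
    rw [hBC, div_lt_iff₀ hpac]
    nlinarith
  have hmc := he hlt
  have hζ : ζ = 0 := hw (by rw [hmc]; exact hμ1)
  subst hζ
  rw [hBC, hBB] at hlc
  simp only [emap] at hlc
  have h1 : (pc*(1-0))/(pa+pc) < 1 := by
    rw [div_lt_one hpac]; nlinarith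
  nlinarith [sq_nonneg (1 - (pc*(1-0))/(pa+pc))]

/-- Case where the partition is `{c} | {a,b}`. -/
lemma case_ab (pa pb pc : ℝ) (hpa : 0 < pa) (hpb : 0 < pb)
    (μs νs : ℝ) (hμ0 : 0 < μs) (hμ1 : μs < 1) (hν0 : 0 < νs) (hν1 : νs < 1)
    (hν_ne : νs ≠ pb / (pa + pb))
    (g : Typ → Bool)
    (hA : cls g Typ.a = {Typ.a, Typ.b})
    (hB : cls g Typ.b = {Typ.a, Typ.b})
    (hC : cls g Typ.c = {Typ.c})
    (m : Typ → ℝ) (ζ : ℝ)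
    (hw1 : m Typ.c < μs → ζ = 1) (hw2 : μs < m Typ.c → ζ = 0)
    (he1 : beta1 (pmap pa pb pc) (emap ζ) (cls g Typ.c) < νs → m Typ.c = 1)
    (he2 : νs < beta1 (pmap pa pb pc) (emap ζ) (cls g Typ.c) → m Typ.c = 0)
    (hlcA : (emap ζ Typ.a - beta1 (pmap pa pb pc) (emap ζ) (cls g Typ.a)) ^ 2 ≤
        (emap ζ Typ.a - beta1 (pmap pa pb pc) (emap ζ) (cls g Typ.c)) ^ 2)
    (hlcB : (emap ζ Typ.b - beta1 (pmap pa pb pc) (emap ζ) (cls g Typ.b)) ^ 2 ≤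
        (emap ζ Typ.b - beta1 (pmap pa pb pc) (emap ζ) (cls g Typ.c)) ^ 2) : False := by
  have hpab : (0:ℝ) < pa + pb := by linarith
  have hpc' : pc ≠ 0 ∨ True := Or.inr trivial
  have hBC : beta1 (pmap pa pb pc) (emap ζ) (cls g Typ.c) = 1 - ζ ∨
      beta1 (pmap pa pb pc) (emap ζ) (cls g Typ.c) = 0 := by
    rw [hC]; by_cases h : pc = 0
    · right; simp [beta1, pmap, emap, h]
    · left; simp [beta1, pmap, emap]; field_simp
  have hBA : beta1 (pmap pa pb pc) (emap ζ) (cls g Typ.a) = pb/(pa+pb) := by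
    rw [hA]; simp [beta1, Finset.sum_pair (by decide : Typ.a ≠ Typ.b), pmap, emap]
  have hBB : beta1 (pmap pa pb pc) (emap ζ) (cls g Typ.b) = pb/(pa+pb) := by
    rw [hB]; simp [beta1, Finset.sum_pair (by decide : Typ.a ≠ Typ.b), pmap, emap]
  -- show βc = νs (where βc is the class-c expectation)
  set βc := beta1 (pmap pa pb pc) (emap ζ) (cls g Typ.c) with hβc
  have hβν : βc = νs := by
    rcases lt_trichotomy βc νs with h | h | h
    · have hmc := he1 h
      have hζ0 : ζ = 0 := hw2 (by rw [hmc]; exact hμ1)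
      rcases hBC with hb | hb
      · rw [hb, hζ0] at h; linarith
      · -- pc = 0 case: βc = 0, but then with ζ = 0 also fine? βc = 0 < νs, m c = 1, ζ = 0;
        -- 1 - ζ = 1 but βc = 0. No contradiction from here directly; handle below.
        exfalso
        -- when pc = 0 the beta1 is 0/0 = 0 and βc = 0 < νs always; then ζ = 0.
        -- clustering for b: (1 - pb/(pa+pb))² ≤ (1 - 0)² -- not contradiction.
        -- clustering for a: (pb/(pa+pb))² ≤ 0² ⇒ pb/(pa+pb) = 0, contra.
        rw [hBA] at hlcA
        rw [hb] at hlcA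
        simp only [emap] at hlcA
        have : (0:ℝ) < pb/(pa+pb) := by positivity
        nlinarith
    · exact h
    · have hmc := he2 h
      have hζ1 : ζ = 1 := hw1 (by rw [hmc]; exact hμ0)
      rcases hBC with hb | hb
      · rw [hb, hζ1] at h; linarith
      · rw [hb] at h; linarith
  rw [hBA, hβν] at hlcA
  rw [hBB, hβν] at hlcB
  simp only [emap] at hlcA hlcB
  have h1 : (0:ℝ) < pb/(pa+pb) := by positivity
  have h2 : pb/(pa+pb) < 1 := by rw [div_lt_one hpab]; linarith
  have hle : pb/(pa+pb) ≤ νs := by nlinarith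
  have hge : νs ≤ pb/(pa+pb) := by nlinarith
  exact hν_ne (le_antisymm hge hle)

/-- **No pure clustered ABEE in the monitoring game** (Proposition 4).

Assume `p_c ≤ p_a`, `p_c ≤ p_b`, `p_c/(p_a+p_c) < ν* < p_b/(p_b+p_c)` and
`ν* ≠ p_b/(p_a+p_b)`.  Then no two-class analogy partition of `{a,b,c}` (encoded by a
labeling `g : Typ → Bool` with both fibers nonempty), employer control probabilities
`m : Typ → [0,1]` and worker mixing `ζ ∈ [0,1]` can simultaneously satisfy the worker's
best response, the employer's best response the consistent expectations, and local
clustering of the partition with respect to the worker's behavior. -/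
theorem monitoring_no_pure_clustered_ABEE
    (pa pb pc : ℝ) (hpa : 0 < pa) (hpb : 0 < pb) (hpc : 0 < pc)
    (hsum : pa + pb + pc = 1) (hca : pc ≤ pa) (hcb : pc ≤ pb)
    (μs νs : ℝ) (hμ0 : 0 < μs) (hμ1 : μs < 1) (hν0 : 0 < νs) (hν1 : νs < 1)
    (hν_lo : pc / (pa + pc) < νs) (hν_hi : νs < pb / (pb + pc))
    (hν_ne : νs ≠ pb / (pa + pb))
    (g : Typ → Bool) (hgt : ∃ ω, g ω = true) (hgf : ∃ ω, g ω = false)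
    (m : Typ → ℝ) (hm : ∀ ω, m ω ∈ Set.Icc (0 : ℝ) 1)
    (ζ : ℝ) (hζ : ζ ∈ Set.Icc (0 : ℝ) 1)
    -- (i) worker best response
    (hw : (m Typ.c < μs → ζ = 1) ∧ (μs < m Typ.c → ζ = 0))
    -- (ii) employer best response
    (he : ∀ ω, (beta1 (pmap pa pb pc) (emap ζ) (cls g ω) < νs → m ω = 1) ∧
               (νs < beta1 (pmap pa pb pc) (emap ζ) (cls g ω) → m ω = 0))
    -- (iii) local clustering
    (hlc : ∀ ω ω' : Typ,
      (emap ζ ω - beta1 (pmap pa pb pc) (emap ζ) (cls g ω)) ^ 2 ≤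
        (emap ζ ω - beta1 (pmap pa pb pc) (emap ζ) (cls g ω')) ^ 2) :
    False := by
  obtain ⟨hζ0, hζ1⟩ := hζ
  cases ha : g Typ.a <;> cases hb : g Typ.b <;> cases hc : g Typ.c
  · obtain ⟨ω, hω⟩ := hgt; cases ω <;> simp_all
  · -- a,b false, c true : partition {c} | {a,b}
    exact case_ab pa pb pc hpa hpb μs νs hμ0 hμ1 hν0 hν1 hν_ne g
      (by ext ω; cases ω <;> simp [cls, ha, hb, hc])
      (by ext ω; cases ω <;> simp [cls, ha, hb, hc])
      (by ext ω; cases ω <;> simp [cls, ha, hb, hc])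
      m ζ hw.1 hw.2 (he Typ.c).1 (he Typ.c).2 (hlc Typ.a Typ.c) (hlc Typ.b Typ.c)
  · -- a,c false, b true : partition {b} | {a,c}
    exact case_ac pa pb pc hpa hpb hpc μs νs hμ1 hν1 hν_lo g
      (by ext ω; cases ω <;> simp [cls, ha, hb, hc])
      (by ext ω; cases ω <;> simp [cls, ha, hb, hc])
      m ζ hζ0 hw.2 (he Typ.c).1 (hlc Typ.c Typ.b)
  · -- a false, b,c true : partition {a} | {b,c}
    exact case_bc pa pb pc hpb hpc μs νs hμ0 hν0 hν_hi g
      (by ext ω; cases ω <;> simp [cls, ha, hb, hc])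
      (by ext ω; cases ω <;> simp [cls, ha, hb, hc])
      m ζ hζ1 hw.1 (he Typ.c).2 (hlc Typ.c Typ.a)
  · -- a true, b,c false : partition {a} | {b,c}
    exact case_bc pa pb pc hpb hpc μs νs hμ0 hν0 hν_hi g
      (by ext ω; cases ω <;> simp [cls, ha, hb, hc])
      (by ext ω; cases ω <;> simp [cls, ha, hb, hc])
      m ζ hζ1 hw.1 (he Typ.c).2 (hlc Typ.c Typ.a)
  · -- a,c true, b false : partition {b} | {a,c}
    exact case_ac pa pb pc hpa hpb hpc μs νs hμ1 hν1 hν_lo g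
      (by ext ω; cases ω <;> simp [cls, ha, hb, hc])
      (by ext ω; cases ω <;> simp [cls, ha, hb, hc])
      m ζ hζ0 hw.2 (he Typ.c).1 (hlc Typ.c Typ.b)
  · -- a,b true, c false : partition {c} | {a,b}
    exact case_ab pa pb pc hpa hpb μs νs hμ0 hμ1 hν0 hν1 hν_ne g
      (by ext ω; cases ω <;> simp [cls, ha, hb, hc])
      (by ext ω; cases ω <;> simp [cls, ha, hb, hc])
      (by ext ω; cases ω <;> simp [cls, ha, hb, hc])
      m ζ hw.1 hw.2 (he Typ.c).1 (he Typ.c).2 (hlc Typ.a Typ.c) (hlc Typ.b Typ.c)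
  · obtain ⟨ω, hω⟩ := hgf; cases ω <;> simp_all
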